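/- If G is a graph with no isolated vertices and S ⊆ V(G) is a domination-irredundant set, then S is a VC-irredundant set. Consequently DIR(G) ≤ VCIR(G). -/

import Mathlib

/-- Every domination-irredundant set is VC-irredundant; hence `DIR(G) ≤ VCIR(G)`. -/
theorem stmt11 {V : Type*} [Fintype V] (G : SimpleGraph V)
    (hni : ∀ v : V, ∃ w, G.Adj v w) :
    let DIrr : Set V → Prop := fun S =>
      ∀ x ∈ S, ∃ w : V, (insert w (G.neighborSet w)) ∩ S = {x}
    let VIrr : Set V → Prop := fun S => ∀ x ∈ S, ∃ u, G.Adj x u ∧ u ∉ S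
    (∀ S : Set V, DIrr S → VIrr S) ∧
      sSup {n | ∃ S : Set V, (DIrr S ∧ ∀ T : Set V, S ⊂ T → ¬ DIrr T) ∧ S.ncard = n} ≤
        sSup {n | ∃ S : Set V, (VIrr S ∧ ∀ T : Set V, S ⊂ T → ¬ VIrr T) ∧ S.ncard = n} := by
  intro DIrr VIrr
  have main : ∀ S : Set V, DIrr S → VIrr S := by
    intro S hS x hx
    obtain ⟨w, hw⟩ := hS x hx
    have hxmem : x ∈ insert w (G.neighborSet w) := by
      have : x ∈ (insert w (G.neighborSet w)) ∩ S := by rw [hw]; rfl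
      exact this.1
    rcases Set.mem_insert_iff.mp hxmem with hxe | hadj
    · -- x = w : no neighbor of x is in S
      subst hxe
      obtain ⟨u, hu⟩ := hni x
      refine ⟨u, hu, fun huS => ?_⟩
      have : u ∈ (insert x (G.neighborSet x)) ∩ S :=
        ⟨Set.mem_insert_iff.mpr (Or.inr hu), huS⟩
      rw [hw] at this
      exact G.irrefl (this ▸ hu)
    · -- w adjacent to x, w ∉ S
      refine ⟨w, hadj.symm, fun hwS => ?_⟩
      have : w ∈ (insert w (G.neighborSet w)) ∩ S := ⟨Set.mem_insert _ _, hwS⟩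
      rw [hw] at this
      rw [this] at hadj
      exact G.irrefl hadj
  refine ⟨main, ?_⟩
  -- extend any VIrr set to a maximal one
  have ext : ∀ S : Set V, VIrr S →
      ∃ M : Set V, S ⊆ M ∧ (VIrr M ∧ ∀ T : Set V, M ⊂ T → ¬ VIrr T) := by
    intro S hS
    have hfin : ({T : Set V | S ⊆ T ∧ VIrr T}).Finite := Set.toFinite _
    obtain ⟨M, hM, hmax⟩ := Set.Finite.exists_maximal hfin ⟨S, subset_rfl, hS⟩
    refine ⟨M, hM.1, hM.2, fun T hMT hT => ?_⟩
    have := hmax (⟨hM.1.trans hMT.subset, hT⟩ : T ∈ {T : Set V | S ⊆ T ∧ VIrr T}) hMT.subset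
    exact not_subset_of_ssubset hMT this
  have hbdd : BddAbove {n | ∃ S : Set V, (VIrr S ∧ ∀ T : Set V, S ⊂ T → ¬ VIrr T) ∧ S.ncard = n} := by
    refine ⟨Fintype.card V, fun n hn => ?_⟩
    obtain ⟨S, _, rfl⟩ := hn
    calc S.ncard ≤ Set.univ.ncard := Set.ncard_le_ncard (Set.subset_univ S) Set.finite_univ
      _ = Fintype.card V := by simp [Set.ncard_univ]
  rcases Set.eq_empty_or_nonempty
      {n | ∃ S : Set V, (DIrr S ∧ ∀ T : Set V, S ⊂ T → ¬ DIrr T) ∧ S.ncard = n} with he | hne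
  · rw [he]; simp
  · refine csSup_le hne ?_
    rintro n ⟨S, ⟨hSD, _⟩, rfl⟩
    obtain ⟨M, hSM, hMmax⟩ := ext S (main S hSD)
    calc S.ncard ≤ M.ncard := Set.ncard_le_ncard hSM (Set.toFinite _)
      _ ≤ _ := le_csSup hbdd ⟨M, hMmax, rfl⟩
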